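/- If 1/N ≤ 1/(N + a N^α) + γ (N + a N^α)^{−β} holds for all sufficiently large N with a, γ > 0 and 0 < α ≤ 1, β ≥ 1, then β ≤ 2 − α; in particular β ≤ 2. -/

import Mathlib

open Filter Real

/-- Error exponent bound: if `1/N ≤ 1/(N + a N^α) + γ (N + a N^α)^(-β)` for all
sufficiently large `N`, with `a, γ > 0`, `0 < α ≤ 1`, `β ≥ 1`, then
`β ≤ 2 - α`; in particular `β ≤ 2`. -/
theorem sql_error_exponent (a γ α β : ℝ) (ha : 0 < a) (hγ : 0 < γ)
    (hα : 0 < α) (hα1 : α ≤ 1) (hβ : 1 ≤ β)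
    (h : ∀ᶠ N : ℕ in atTop,
      1 / (N : ℝ) ≤ 1 / ((N : ℝ) + a * (N : ℝ) ^ α)
        + γ * ((N : ℝ) + a * (N : ℝ) ^ α) ^ (-β)) :
    β ≤ 2 - α ∧ β ≤ 2 := by
  have main : β ≤ 2 - α := by
    by_contra hlt
    push_neg at hlt
    set ε := α + β - 2 with hε_def
    have hε : 0 < ε := by linarith
    have C := γ * (1 + a) / a
    -- eventually (N:ℝ)^ε ≤ γ*(1+a)/a
    have hbound : ∀ᶠ N : ℕ in atTop, ((N : ℝ)) ^ ε ≤ γ * (1 + a) / a := by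
      filter_upwards [h, eventually_ge_atTop 1] with N hN hN1
      set x : ℝ := (N : ℝ) with hx_def
      have hx1 : (1 : ℝ) ≤ x := by rw [hx_def]; exact_mod_cast hN1
      have hx0 : (0 : ℝ) < x := by linarith
      have hxa : (0 : ℝ) < x ^ α := Real.rpow_pos_of_pos hx0 α
      set M : ℝ := x + a * x ^ α with hM_def
      have hM0 : 0 < M := by positivity
      have hxM : x ≤ M := by nlinarith
      have hMle : M ≤ (1 + a) * x := by
        have : x ^ α ≤ x := by
          calc x ^ α ≤ x ^ (1 : ℝ) :=
            Real.rpow_le_rpow_of_exponent_le hx1 hα1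
          _ = x := Real.rpow_one x
        nlinarith
      have hMβ : (0 : ℝ) < M ^ β := Real.rpow_pos_of_pos hM0 β
      have hxβ : x ^ β ≤ M ^ β := Real.rpow_le_rpow hx0.le hxM (by linarith)
      have hN' : 1 / x ≤ 1 / M + γ * M ^ (-β) := hN
      rw [Real.rpow_neg hM0.le] at hN'
      -- derive a * x^α * M^β ≤ γ * x * M
      have key : a * x ^ α * M ^ β ≤ γ * x * M := by
        have h1 : a * x ^ α / (x * M) ≤ γ / M ^ β := by
          have : 1 / x - 1 / M = a * x ^ α / (x * M) := by
            field_simp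
            ring
          have h2 : 1 / x - 1 / M ≤ γ * (M ^ β)⁻¹ := by linarith
          rw [this] at h2
          simpa [div_eq_mul_inv] using h2
        have := (div_le_div_iff₀ (by positivity) hMβ).mp h1
        nlinarith
      have key2 : a * x ^ (α + β) ≤ γ * (1 + a) * x ^ (2 : ℝ) := by
        have e1 : x ^ (α + β) = x ^ α * x ^ β := Real.rpow_add hx0 α β
        have e2 : x ^ (2 : ℝ) = x * x := by
          rw [show (2:ℝ) = 1 + 1 by norm_num, Real.rpow_add hx0, Real.rpow_one]
        rw [e1, e2]
        calc a * (x ^ α * x ^ β) ≤ a * x ^ α * M ^ β := by nlinarith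
          _ ≤ γ * x * M := key
          _ ≤ γ * x * ((1 + a) * x) :=
              mul_le_mul_of_nonneg_left hMle (by positivity)
          _ = γ * (1 + a) * (x * x) := by ring
      have e3 : x ^ (α + β) = x ^ ε * x ^ (2 : ℝ) := by
        rw [← Real.rpow_add hx0]
        ring_nf
        rw [hε_def]; ring_nf
      rw [e3] at key2
      have hx2 : (0 : ℝ) < x ^ (2 : ℝ) := Real.rpow_pos_of_pos hx0 2
      rw [le_div_iff₀ ha]
      have h4 : x ^ ε * a * x ^ (2 : ℝ) ≤ γ * (1 + a) * x ^ (2 : ℝ) := by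
        linear_combination key2
      exact le_of_mul_le_mul_right h4 hx2
    -- but x^ε → ∞
    have htend : Tendsto (fun N : ℕ => ((N : ℝ)) ^ ε) atTop atTop :=
      (tendsto_rpow_atTop hε).comp tendsto_natCast_atTop_atTop
    have := (htend.eventually (eventually_gt_atTop (γ * (1 + a) / a))).and hbound
    obtain ⟨N, h1, h2⟩ := this.exists
    linarith
  exact ⟨main, by linarith⟩
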